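/- The matrix S̃_c is symmetric positive semidefinite, and its K_c-th largest eigenvalue satisfies λ_{K_c}(S̃_c) ≥ θ_{r,min}^2 · θ_{c,min}^2 · n_{r,min} · n_{c,min} · λ_min(Σ_{l=1}^L B_l^T B_l), where λ_min(Σ_{l=1}^L B_l^T B_l) denotes the smallest eigenvalue of the K_c × K_c positive semidefinite matrix Σ_{l=1}^L B_l^T B_l. -/

import Mathlib

open Matrix Finset


lemma quad_eig {n : ℕ} (M : Matrix (Fin n) (Fin n) ℝ) (hM : M.IsHermitian) :
    ∃ W : Matrix (Fin n) (Fin n) ℝ, ∀ x : Fin n → ℝ,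
      x ⬝ᵥ (M *ᵥ x) = ∑ j, hM.eigenvalues j * ((W *ᵥ x) j)^2 ∧
      x ⬝ᵥ x = ∑ j, ((W *ᵥ x) j)^2 := by
  refine ⟨star (hM.eigenvectorUnitary : Matrix (Fin n) (Fin n) ℝ), fun x => ?_⟩
  set U := (hM.eigenvectorUnitary : Matrix (Fin n) (Fin n) ℝ) with hUdef
  have hU2 : U * star U = 1 := Unitary.coe_mul_star_self _
  have hdot : ∀ v : Fin n → ℝ, x ⬝ᵥ (U *ᵥ v) = (star U *ᵥ x) ⬝ᵥ v := by
    intro v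
    rw [Matrix.dotProduct_mulVec]
    congr 1
    rw [Matrix.star_eq_conjTranspose, Matrix.conjTranspose_eq_transpose_of_trivial,
      ← Matrix.vecMul_transpose, Matrix.transpose_transpose]
  constructor
  · conv_lhs => rw [hM.spectral_theorem, Unitary.conjStarAlgAut_apply]
    rw [← Matrix.mulVec_mulVec, ← Matrix.mulVec_mulVec, hdot]
    simp only [Matrix.mulVec_diagonal, dotProduct]
    refine Finset.sum_congr rfl fun j _ => ?_
    simp [Function.comp]
    ring
  · have : x ⬝ᵥ x = x ⬝ᵥ ((U * star U) *ᵥ x) := by rw [hU2, Matrix.one_mulVec]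
    rw [this, ← Matrix.mulVec_mulVec, hdot]
    simp [dotProduct, pow_two]

lemma sum_mulVec' {m n ι : Type*} [Fintype m] [Fintype n] [Fintype ι]
    (A : ι → Matrix m n ℝ) (x : n → ℝ) :
    (∑ l, A l) *ᵥ x = ∑ l, A l *ᵥ x := by
  ext i
  simp [Matrix.mulVec, dotProduct, Matrix.sum_apply, Finset.sum_mul]
  rw [Finset.sum_comm]

lemma dotProduct_sum' {n ι : Type*} [Fintype n] [Fintype ι]
    (x : n → ℝ) (v : ι → n → ℝ) : x ⬝ᵥ (∑ l, v l) = ∑ l, x ⬝ᵥ v l := by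
  simp [dotProduct, Finset.sum_apply, Finset.mul_sum]
  rw [Finset.sum_comm]

lemma gram_quad {m n ι : Type*} [Fintype m] [Fintype n] [Fintype ι]
    (A : ι → Matrix m n ℝ) (x : n → ℝ) :
    x ⬝ᵥ ((∑ l, (A l)ᵀ * A l) *ᵥ x) = ∑ l, (A l *ᵥ x) ⬝ᵥ (A l *ᵥ x) := by
  rw [sum_mulVec', dotProduct_sum']
  refine Finset.sum_congr rfl fun l _ => ?_
  rw [← Matrix.mulVec_mulVec, Matrix.dotProduct_mulVec, Matrix.vecMul_transpose]

lemma step_membership {n K : ℕ} (Z : Matrix (Fin n) (Fin K) ℝ)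
    (hZ01 : ∀ i k, Z i k = 0 ∨ Z i k = 1) (hZrow : ∀ i, ∃! k, Z i k = 1)
    (θ : Fin n → ℝ) (tmin : ℝ) (htpos : 0 ≤ tmin) (htle : ∀ i, tmin ≤ θ i)
    (nmin : ℕ) (hnmin : ∀ k, nmin ≤ (univ.filter fun i => Z i k = 1).card)
    (u : Fin K → ℝ) :
    tmin ^ 2 * nmin * (u ⬝ᵥ u) ≤
      (Matrix.diagonal θ *ᵥ (Z *ᵥ u)) ⬝ᵥ (Matrix.diagonal θ *ᵥ (Z *ᵥ u)) := by
  classical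
  set κ : Fin n → Fin K := fun i => (hZrow i).choose with hκdef
  have hκ1 : ∀ i, Z i (κ i) = 1 := fun i => (hZrow i).choose_spec.1
  have hκ0 : ∀ i k, k ≠ κ i → Z i k = 0 := by
    intro i k hk
    rcases hZ01 i k with h | h
    · exact h
    · exact absurd ((hZrow i).choose_spec.2 k h).symm (Ne.symm hk)
  have hmv : ∀ i, (Z *ᵥ u) i = u (κ i) := by
    intro i
    rw [Matrix.mulVec, dotProduct]
    rw [Finset.sum_eq_single (κ i)]
    · rw [hκ1 i]; ring
    · intro k _ hk; rw [hκ0 i k hk]; ring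
    · intro h; exact absurd (Finset.mem_univ _) h
  have key : (Matrix.diagonal θ *ᵥ (Z *ᵥ u)) ⬝ᵥ (Matrix.diagonal θ *ᵥ (Z *ᵥ u))
      = ∑ i, θ i ^ 2 * u (κ i) ^ 2 := by
    simp [dotProduct, Matrix.mulVec_diagonal, hmv]
    refine Finset.sum_congr rfl fun i _ => by ring
  rw [key]
  have step1 : ∑ i, tmin ^ 2 * u (κ i) ^ 2 ≤ ∑ i, θ i ^ 2 * u (κ i) ^ 2 := by
    refine Finset.sum_le_sum fun i _ => ?_
    have := pow_le_pow_left₀ htpos (htle i) 2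
    nlinarith [sq_nonneg (u (κ i))]
  refine le_trans ?_ step1
  rw [← Finset.mul_sum]
  have fib : ∑ i, u (κ i) ^ 2 = ∑ k, ((univ.filter fun i => κ i = k).card : ℝ) * u k ^ 2 := by
    rw [← Finset.sum_fiberwise univ κ (fun i => u (κ i) ^ 2)]
    refine Finset.sum_congr rfl fun k _ => ?_
    rw [Finset.sum_congr rfl (fun i hi => by
      rw [(Finset.mem_filter.mp hi).2])]
    simp [mul_comm]
  rw [fib]
  have hfilt : ∀ k, (univ.filter fun i => κ i = k) = (univ.filter fun i => Z i k = 1) := by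
    intro k
    ext i
    simp only [Finset.mem_filter, Finset.mem_univ, true_and]
    constructor
    · rintro rfl; exact hκ1 i
    · intro h; exact ((hZrow i).choose_spec.2 _ h).symm
  have tsum : ∑ k, (nmin : ℝ) * u k ^ 2 ≤ ∑ k, ((univ.filter fun i => κ i = k).card : ℝ) * u k ^ 2 := by
    refine Finset.sum_le_sum fun k _ => ?_
    have h1 : (nmin : ℝ) ≤ ((univ.filter fun i => κ i = k).card : ℝ) := by
      rw [hfilt k]; exact_mod_cast hnmin k
    nlinarith [sq_nonneg (u k)]
  calc tmin ^ 2 * ↑nmin * (u ⬝ᵥ u) = tmin ^ 2 * ∑ k, (nmin : ℝ) * u k ^ 2 := by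
        rw [Finset.mul_sum, dotProduct, Finset.mul_sum]
        refine Finset.sum_congr rfl fun k _ => by ring
    _ ≤ tmin ^ 2 * ∑ k, ((univ.filter fun i => κ i = k).card : ℝ) * u k ^ 2 := by
        exact mul_le_mul_of_nonneg_left tsum (sq_nonneg tmin)

set_option maxHeartbeats 1000000 in
theorem stmt13
    (nr nc Kr Kc L : ℕ)
    (hnr : 0 < nr) (hnc : 0 < nc) (hKr : 0 < Kr) (hKc : 0 < Kc) (hL : 0 < L)
    (Zr : Matrix (Fin nr) (Fin Kr) ℝ) (Zc : Matrix (Fin nc) (Fin Kc) ℝ)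
    (hZr01 : ∀ i k, Zr i k = 0 ∨ Zr i k = 1)
    (hZrrow : ∀ i, ∃! k, Zr i k = 1)
    (hZrcol : ∀ k, ∃ i, Zr i k = 1)
    (hZc01 : ∀ j k, Zc j k = 0 ∨ Zc j k = 1)
    (hZcrow : ∀ j, ∃! k, Zc j k = 1)
    (hZccol : ∀ k, ∃ j, Zc j k = 1)
    (θr : Fin nr → ℝ) (θc : Fin nc → ℝ)
    (hθr : ∀ i, 0 < θr i ∧ θr i ≤ 1) (hθc : ∀ j, 0 < θc j ∧ θc j ≤ 1)
    (B : Fin L → Matrix (Fin Kr) (Fin Kc) ℝ)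
    (hB01 : ∀ l k k', 0 ≤ B l k k' ∧ B l k k' ≤ 1)
    (Ωm : Fin L → Matrix (Fin nr) (Fin nc) ℝ)
    (hΩm : ∀ l, Ωm l = Matrix.diagonal θr * Zr * B l * (Zc)ᵀ * Matrix.diagonal θc)
    (Stc : Matrix (Fin nc) (Fin nc) ℝ)
    (hStc : Stc = ∑ l, (Ωm l)ᵀ * Ωm l)
    (θrmin θcmin : ℝ)
    (hθrmin : IsLeast (Set.range θr) θrmin)
    (hθcmin : IsLeast (Set.range θc) θcmin)
    (nrmin ncmin : ℕ)
    (hnrmin : IsLeast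
      (Set.range fun k : Fin Kr => (Finset.univ.filter fun i => Zr i k = 1).card) nrmin)
    (hncmin : IsLeast
      (Set.range fun k : Fin Kc => (Finset.univ.filter fun j => Zc j k = 1).card) ncmin)
    -- the smallest eigenvalue of `∑ l, (B l)ᵀ * B l`
    (hBH : (∑ l, (B l)ᵀ * B l).IsHermitian)
    (lamB : ℝ) (hlamB : IsLeast (Set.range hBH.eigenvalues) lamB) :
    Stc.PosSemidef ∧
    ∃ hH : Stc.IsHermitian,
      Kc ≤ (Finset.univ.filter fun j : Fin nc =>
        θrmin ^ 2 * θcmin ^ 2 * nrmin * ncmin * lamB ≤ hH.eigenvalues j).card := by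
  classical
  -- positive semidefiniteness
  have hpsd : Stc.PosSemidef := by
    rw [hStc]
    refine Finset.sum_induction _ _ (fun a b ha hb => ha.add hb) Matrix.PosSemidef.zero ?_
    intro l _
    have := Matrix.posSemidef_conjTranspose_mul_self (Ωm l)
    rwa [Matrix.conjTranspose_eq_transpose_of_trivial] at this
  have hH : Stc.IsHermitian := hpsd.isHermitian
  refine ⟨hpsd, hH, ?_⟩
  set c : ℝ := θrmin ^ 2 * θcmin ^ 2 * nrmin * ncmin * lamB with hc
  -- basic positivity facts
  obtain ⟨i0, hi0⟩ := hθrmin.1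
  have hθrpos : 0 < θrmin := hi0 ▸ (hθr i0).1
  obtain ⟨j0, hj0⟩ := hθcmin.1
  have hθcpos : 0 < θcmin := hj0 ▸ (hθc j0).1
  have hBpsd : (∑ l, (B l)ᵀ * B l).PosSemidef := by
    refine Finset.sum_induction _ _ (fun a b ha hb => ha.add hb) Matrix.PosSemidef.zero ?_
    intro l _
    have := Matrix.posSemidef_conjTranspose_mul_self (B l)
    rwa [Matrix.conjTranspose_eq_transpose_of_trivial] at this
  have hlamB0 : 0 ≤ lamB := by
    obtain ⟨k0, hk0⟩ := hlamB.1
    exact hk0 ▸ hBpsd.eigenvalues_nonneg k0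
  have hθrle : ∀ i, θrmin ≤ θr i := fun i => hθrmin.2 ⟨i, rfl⟩
  have hθcle : ∀ j, θcmin ≤ θc j := fun j => hθcmin.2 ⟨j, rfl⟩
  have hnrle : ∀ k, nrmin ≤ (univ.filter fun i => Zr i k = 1).card :=
    fun k => hnrmin.2 ⟨k, rfl⟩
  have hncle : ∀ k, ncmin ≤ (univ.filter fun j => Zc j k = 1).card :=
    fun k => hncmin.2 ⟨k, rfl⟩
  -- column community map
  set κc : Fin nc → Fin Kc := fun j => (hZcrow j).choose with hκcdef
  have hκc1 : ∀ j, Zc j (κc j) = 1 := fun j => (hZcrow j).choose_spec.1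
  have hκc0 : ∀ j k, k ≠ κc j → Zc j k = 0 := by
    intro j k hk
    rcases hZc01 j k with h | h
    · exact h
    · exact absurd ((hZcrow j).choose_spec.2 k h).symm (Ne.symm hk)
  have hmvc : ∀ (v : Fin Kc → ℝ) (j : Fin nc), (Zc *ᵥ v) j = v (κc j) := by
    intro v j
    rw [Matrix.mulVec, dotProduct, Finset.sum_eq_single (κc j)]
    · rw [hκc1 j]; ring
    · intro k _ hk; rw [hκc0 j k hk]; ring
    · intro h; exact absurd (Finset.mem_univ _) h
  have hfiltc : ∀ k, (univ.filter fun j => κc j = k) = (univ.filter fun j => Zc j k = 1) := by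
    intro k
    ext j
    simp only [Finset.mem_filter, Finset.mem_univ, true_and]
    constructor
    · rintro rfl; exact hκc1 j
    · intro h; exact ((hZcrow j).choose_spec.2 _ h).symm
  -- the diagonal entries d k
  set d : Fin Kc → ℝ := fun k => ∑ j ∈ univ.filter (fun j => Zc j k = 1), θc j ^ 2 with hddef
  have hd_lb : ∀ k, θcmin ^ 2 * ncmin ≤ d k := by
    intro k
    have h1 : (univ.filter fun j => Zc j k = 1).card • (θcmin ^ 2) ≤ d k := by
      refine Finset.card_nsmul_le_sum _ _ _ fun j _ => ?_
      exact pow_le_pow_left₀ (le_of_lt hθcpos) (hθcle j) 2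
    rw [nsmul_eq_mul] at h1
    calc θcmin ^ 2 * ncmin ≤ θcmin ^ 2 * ((univ.filter fun j => Zc j k = 1).card : ℝ) := by
          have := hncle k
          have : (ncmin : ℝ) ≤ ((univ.filter fun j => Zc j k = 1).card : ℝ) := by exact_mod_cast this
          nlinarith [sq_nonneg θcmin]
      _ = ((univ.filter fun j => Zc j k = 1).card : ℝ) * θcmin ^ 2 := by ring
      _ ≤ d k := h1
  have hd0 : ∀ k, 0 ≤ d k := fun k =>
    le_trans (by positivity) (hd_lb k)
  -- Key quadratic lower bound on the subspace spanned by the columns of Dc * Zc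
  have hQ : ∀ y : Fin Kc → ℝ,
      c * (((Matrix.diagonal θc * Zc) *ᵥ y) ⬝ᵥ ((Matrix.diagonal θc * Zc) *ᵥ y)) ≤
      ((Matrix.diagonal θc * Zc) *ᵥ y) ⬝ᵥ (Stc *ᵥ ((Matrix.diagonal θc * Zc) *ᵥ y)) := by
    intro y
    set x : Fin nc → ℝ := (Matrix.diagonal θc * Zc) *ᵥ y with hxdef
    have hxj : ∀ j, x j = θc j * y (κc j) := by
      intro j
      rw [hxdef, ← Matrix.mulVec_mulVec, Matrix.mulVec_diagonal, hmvc]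
    set z : Fin Kc → ℝ := (Zc)ᵀ *ᵥ (Matrix.diagonal θc *ᵥ x) with hzdef
    have hzk : ∀ k, z k = d k * y k := by
      intro k
      rw [hzdef, Matrix.mulVec, dotProduct]
      rw [← Finset.sum_filter_add_sum_filter_not univ (fun j => Zc j k = 1)]
      have h2 : ∑ j ∈ univ.filter (fun j => ¬ Zc j k = 1),
          (Zc)ᵀ k j * (Matrix.diagonal θc *ᵥ x) j = 0 := by
        refine Finset.sum_eq_zero fun j hj => ?_
        have : Zc j k = 0 := by
          rcases hZc01 j k with h | h
          · exact h
          · exact absurd h (Finset.mem_filter.mp hj).2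
        rw [Matrix.transpose_apply, this, zero_mul]
      rw [h2, add_zero, hddef]
      rw [Finset.sum_mul]
      refine Finset.sum_congr rfl fun j hj => ?_
      have h1 : Zc j k = 1 := (Finset.mem_filter.mp hj).2
      have hκ : κc j = k := ((hZcrow j).choose_spec.2 _ h1).symm
      rw [Matrix.transpose_apply, h1, Matrix.mulVec_diagonal, hxj j, hκ]
      ring
    have hxx : x ⬝ᵥ x = ∑ k, d k * y k ^ 2 := by
      rw [dotProduct]
      have : ∀ j, x j * x j = θc j ^ 2 * y (κc j) ^ 2 := fun j => by rw [hxj j]; ring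
      rw [Finset.sum_congr rfl fun j _ => this j]
      rw [← Finset.sum_fiberwise univ κc (fun j => θc j ^ 2 * y (κc j) ^ 2)]
      refine Finset.sum_congr rfl fun k _ => ?_
      rw [Finset.sum_congr rfl (fun j hj => by rw [(Finset.mem_filter.mp hj).2]),
        hfiltc k, hddef, Finset.sum_mul]
    have hzz : z ⬝ᵥ z = ∑ k, d k ^ 2 * y k ^ 2 := by
      rw [dotProduct]
      refine Finset.sum_congr rfl fun k _ => ?_
      rw [hzk k]; ring
    have hzzx : θcmin ^ 2 * ncmin * (x ⬝ᵥ x) ≤ z ⬝ᵥ z := by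
      rw [hxx, hzz, Finset.mul_sum]
      refine Finset.sum_le_sum fun k _ => ?_
      have h1 := hd_lb k
      have h2 := hd0 k
      nlinarith [sq_nonneg (y k), mul_le_mul_of_nonneg_right h1 (mul_nonneg h2 (sq_nonneg (y k)))]
    -- rewrite the quadratic form
    have hΩx : ∀ l, Ωm l *ᵥ x = Matrix.diagonal θr *ᵥ (Zr *ᵥ (B l *ᵥ z)) := by
      intro l
      rw [hΩm l, hzdef]
      simp only [← Matrix.mulVec_mulVec]
    have hexp : x ⬝ᵥ (Stc *ᵥ x) = ∑ l, (Ωm l *ᵥ x) ⬝ᵥ (Ωm l *ᵥ x) := by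
      rw [hStc]; exact gram_quad Ωm x
    -- lower bound each term
    have hterm : ∀ l, θrmin ^ 2 * nrmin * ((B l *ᵥ z) ⬝ᵥ (B l *ᵥ z)) ≤
        (Ωm l *ᵥ x) ⬝ᵥ (Ωm l *ᵥ x) := by
      intro l
      rw [hΩx l]
      exact step_membership Zr hZr01 hZrrow θr θrmin (le_of_lt hθrpos) hθrle nrmin hnrle _
    -- sum of B-quadratics
    have hBsum : ∑ l, (B l *ᵥ z) ⬝ᵥ (B l *ᵥ z) = z ⬝ᵥ ((∑ l, (B l)ᵀ * B l) *ᵥ z) :=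
      (gram_quad B z).symm
    have hBlow : lamB * (z ⬝ᵥ z) ≤ z ⬝ᵥ ((∑ l, (B l)ᵀ * B l) *ᵥ z) := by
      obtain ⟨W, hW⟩ := quad_eig _ hBH
      obtain ⟨h1, h2⟩ := hW z
      rw [h1, h2, Finset.mul_sum]
      refine Finset.sum_le_sum fun k _ => ?_
      have := hlamB.2 ⟨k, rfl⟩
      nlinarith [sq_nonneg ((W *ᵥ z) k)]
    calc c * (x ⬝ᵥ x)
        = θrmin ^ 2 * nrmin * (lamB * (θcmin ^ 2 * ncmin * (x ⬝ᵥ x))) := by rw [hc]; ring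
      _ ≤ θrmin ^ 2 * nrmin * (lamB * (z ⬝ᵥ z)) := by
          refine mul_le_mul_of_nonneg_left (mul_le_mul_of_nonneg_left hzzx hlamB0) ?_
          positivity
      _ ≤ θrmin ^ 2 * nrmin * (z ⬝ᵥ ((∑ l, (B l)ᵀ * B l) *ᵥ z)) := by
          refine mul_le_mul_of_nonneg_left hBlow ?_
          positivity
      _ = θrmin ^ 2 * nrmin * ∑ l, (B l *ᵥ z) ⬝ᵥ (B l *ᵥ z) := by rw [hBsum]
      _ = ∑ l, θrmin ^ 2 * nrmin * ((B l *ᵥ z) ⬝ᵥ (B l *ᵥ z)) := by rw [Finset.mul_sum]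
      _ ≤ ∑ l, (Ωm l *ᵥ x) ⬝ᵥ (Ωm l *ᵥ x) := Finset.sum_le_sum fun l _ => hterm l
      _ = x ⬝ᵥ (Stc *ᵥ x) := hexp.symm
  -- counting eigenvalues
  by_contra hcount
  push_neg at hcount
  set S : Finset (Fin nc) := univ.filter (fun j : Fin nc => c ≤ hH.eigenvalues j) with hSdef
  obtain ⟨W, hW⟩ := quad_eig Stc hH
  -- the linear map from coefficient space to the "large eigenvalue" coordinates
  set φ : (Fin Kc → ℝ) →ₗ[ℝ] ({j // j ∈ S} → ℝ) :=
    LinearMap.pi (fun j : {j // j ∈ S} =>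
      (LinearMap.proj j.1).comp (Matrix.mulVecLin (W * (Matrix.diagonal θc * Zc)))) with hφdef
  have hnotinj : ¬ Function.Injective φ := by
    intro hinj
    have := LinearMap.finrank_le_finrank_of_injective hinj
    rw [Module.finrank_pi ℝ, Module.finrank_pi ℝ] at this
    simp only [Fintype.card_fin, Fintype.card_coe] at this
    exact absurd this (not_le.mpr hcount)
  rw [injective_iff_map_eq_zero] at hnotinj
  push_neg at hnotinj
  obtain ⟨y, hyker, hyne⟩ := hnotinj
  set x : Fin nc → ℝ := (Matrix.diagonal θc * Zc) *ᵥ y with hxdef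
  have hxne : x ≠ 0 := by
    obtain ⟨k, hk⟩ := Function.ne_iff.mp hyne
    obtain ⟨j, hj⟩ := hZccol k
    have hκ : κc j = k := ((hZcrow j).choose_spec.2 _ hj).symm
    intro h0
    have : x j = 0 := by rw [h0]; rfl
    rw [hxdef, ← Matrix.mulVec_mulVec, Matrix.mulVec_diagonal, hmvc, hκ] at this
    have := mul_eq_zero.mp this
    rcases this with h | h
    · exact absurd h (ne_of_gt (hθc j).1)
    · exact hk h
  have hw0 : ∀ j ∈ S, (W *ᵥ x) j = 0 := by
    intro j hj
    have := congrFun hyker ⟨j, hj⟩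
    simpa [hφdef, hxdef, Matrix.mulVecLin_apply, Matrix.mulVec_mulVec] using this
  obtain ⟨h1, h2⟩ := hW x
  have hxxpos : 0 < x ⬝ᵥ x := by
    have hnn : (0:ℝ) ≤ x ⬝ᵥ x := Finset.sum_nonneg fun j _ => mul_self_nonneg _
    rcases lt_or_eq_of_le hnn with h | h
    · exact h
    · exact absurd (dotProduct_self_eq_zero.mp h.symm) hxne
  have hwex : ∃ j, (W *ᵥ x) j ≠ 0 := by
    by_contra hall
    push_neg at hall
    rw [h2] at hxxpos
    have : ∑ j, ((W *ᵥ x) j) ^ 2 = 0 :=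
      Finset.sum_eq_zero fun j _ => by rw [hall j]; ring
    rw [this] at hxxpos; exact lt_irrefl _ hxxpos
  obtain ⟨j1, hj1⟩ := hwex
  have hj1S : j1 ∉ S := fun h => hj1 (hw0 j1 h)
  have hj1lt : hH.eigenvalues j1 < c := by
    by_contra h
    push_neg at h
    exact hj1S (by rw [hSdef]; exact Finset.mem_filter.mpr ⟨Finset.mem_univ _, h⟩)
  have hstrict : x ⬝ᵥ (Stc *ᵥ x) < c * (x ⬝ᵥ x) := by
    rw [h1, h2, Finset.mul_sum]
    refine Finset.sum_lt_sum (fun j _ => ?_) ⟨j1, Finset.mem_univ _, ?_⟩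
    · by_cases hjS : j ∈ S
      · rw [hw0 j hjS]; simp
      · have : hH.eigenvalues j < c := by
          by_contra h
          push_neg at h
          exact hjS (by rw [hSdef]; exact Finset.mem_filter.mpr ⟨Finset.mem_univ _, h⟩)
        nlinarith [sq_nonneg ((W *ᵥ x) j)]
    · have : 0 < ((W *ᵥ x) j1) ^ 2 := by positivity
      nlinarith
  exact absurd (hQ y) (not_le.mpr hstrict)
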